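/- arXiv:1309.3866 — 2 statements merged into one kernel-verified Lean document; each statement's English description precedes it below -/
import Mathlib

section
/- If a Banach space X contains a complemented subspace isometric to ℓ¹, then X admits an equivalent norm |·| such that every convex combination of slices of the unit ball of (X,|·|)* has diameter 2; equivalently, the bidual norm of (X,|·|) is octahedral. -/
open scoped BigOperators ENNReal
open Metric

noncomputable section

/-- The convex combination `∑ lam i • S i` of sets. -/
def ccomb {E : Type*} [AddCommMonoid E] [Module ℝ E] {n : ℕ}
    (lam : Fin n → ℝ) (S : Fin n → Set E) : Set E :=
  {y | ∃ f : Fin n → E, (∀ i, f i ∈ S i) ∧ y = ∑ i, lam i • f i}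

/-- The slice of a bounded set `A` cut by the functional `Φ` at depth `β` below its
supremum on `A`. -/
def supSlice {E : Type*} [NormedAddCommGroup E] [NormedSpace ℝ E]
    (A : Set E) (Φ : StrongDual ℝ E) (β : ℝ) : Set E :=
  {x ∈ A | sSup ((fun y => Φ y) '' A) - β < Φ x}

/-- `B` is the closed unit ball of some norm on `X` equivalent to the given one. -/
def IsEquivBall {X : Type*} [NormedAddCommGroup X] [NormedSpace ℝ X] (B : Set X) : Prop :=
  IsClosed B ∧ Convex ℝ B ∧ B = -B ∧
    (∃ r > (0:ℝ), closedBall 0 r ⊆ B) ∧ (∃ R : ℝ, B ⊆ closedBall 0 R)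

/-- The dual unit ball of the norm with unit ball `B`: the polar of `B`. -/
def dualBall {X : Type*} [NormedAddCommGroup X] [NormedSpace ℝ X] (B : Set X) :
    Set (StrongDual ℝ X) :=
  {f | ∀ x ∈ B, f x ≤ 1}

/-- The dual norm, with respect to the norm with unit ball `B`, of a functional `h`. -/
def dualNormOf {X : Type*} [NormedAddCommGroup X] [NormedSpace ℝ X] (B : Set X)
    (h : StrongDual ℝ X) : ℝ :=
  sSup ((fun x => h x) '' B)

/-! ### Auxiliary `ℓ¹` lemmas -/

abbrev L1aux := lp (fun _ : ℕ => ℝ) 1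

/-- The coordinate evaluation functional on `ℓ¹`. -/
def coordL (k : ℕ) : L1aux →L[ℝ] ℝ :=
  LinearMap.mkContinuous
    { toFun := fun v => v k
      map_add' := fun v w => by simp [lp.coeFn_add]
      map_smul' := fun c v => by simp [lp.coeFn_smul] }
    1 (fun v => by
      show ‖v k‖ ≤ 1 * ‖v‖
      simpa using lp.norm_apply_le_norm one_ne_zero v k)

lemma coordL_apply (k : ℕ) (v : L1aux) : coordL k v = v k := rfl

lemma L1_norm_sub_single (v : L1aux) (k : ℕ) :
    ‖v - (v k) • lp.single 1 k (1:ℝ)‖ = ‖v‖ - |v k| := by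
  have h := lp.norm_sub_norm_compl_sub_single (p := (1:ℝ≥0∞)) (E := fun _ : ℕ => ℝ)
    (by norm_num) v {k}
  simp only [Finset.sum_singleton, ENNReal.toReal_one, Real.rpow_one, Real.norm_eq_abs] at h
  have hs : lp.single (1:ℝ≥0∞) k (v k) = ((v k) • lp.single 1 k (1:ℝ) : L1aux) := by
    have := lp.single_smul (E := fun _ : ℕ => ℝ) (1:ℝ≥0∞) k (1:ℝ) (v k)
    rw [← lp.single_smul, smul_eq_mul, mul_one]
  rw [hs] at h
  linarith

lemma L1_sum_le (v : L1aux) (K : Finset ℕ) : ∑ k ∈ K, |v k| ≤ ‖v‖ := by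
  have h := lp.norm_sub_norm_compl_sub_single (p := (1:ℝ≥0∞)) (E := fun _ : ℕ => ℝ)
    (by norm_num) v K
  simp only [ENNReal.toReal_one, Real.rpow_one, Real.norm_eq_abs] at h
  have := norm_nonneg (v - ∑ i ∈ K, lp.single 1 i (v i))
  linarith

lemma L1_norm_single_one (k : ℕ) : ‖(lp.single 1 k (1:ℝ) : L1aux)‖ = 1 := by
  have := lp.norm_single (p := (1:ℝ≥0∞)) (E := fun _ : ℕ => ℝ) (by norm_num)
    k (1:ℝ)
  simpa using this

set_option maxHeartbeats 2000000 in
theorem complemented_l1_copy_renorming_ccomb_slices_dual_diam_two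
    (X : Type*) [NormedAddCommGroup X] [NormedSpace ℝ X] [CompleteSpace X]
    (Y : Subspace ℝ X)
    (hiso : Nonempty (Y ≃ₗᵢ[ℝ] lp (fun _ : ℕ => ℝ) 1))
    (P : X →L[ℝ] X) (hproj : P ∘L P = P) (hrange : Set.range P = (Y : Set X)) :
    ∃ B : Set X, IsEquivBall B ∧
      ∀ (n : ℕ) (lam : Fin n → ℝ), (∀ i, 0 < lam i) → ∑ i, lam i = 1 →
      ∀ (Φ : Fin n → StrongDual ℝ (StrongDual ℝ X)) (β : Fin n → ℝ),
        (∀ i, 0 < β i) →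
        sSup (Set.image2 (fun f g => dualNormOf B (f - g))
          (ccomb lam (fun i => supSlice (dualBall B) (Φ i) (β i)))
          (ccomb lam (fun i => supSlice (dualBall B) (Φ i) (β i)))) = 2 := by
  obtain ⟨T⟩ := hiso
  have hPP : ∀ x, P (P x) = P x := fun x => by
    have := congrArg (fun (q : X →L[ℝ] X) => q x) hproj
    simpa using this
  have hmem : ∀ x, P x ∈ Y := fun x => by
    rw [← SetLike.mem_coe, ← hrange]; exact Set.mem_range_self x
  have hPid : ∀ y, y ∈ Y → P y = y := by
    intro y hy
    rw [← SetLike.mem_coe, ← hrange] at hy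
    obtain ⟨x, rfl⟩ := hy
    exact hPP x
  -- the new norm
  set N : X → ℝ := fun x => ‖P x‖ + ‖x - P x‖ with hNdef
  have hNnonneg : ∀ x, 0 ≤ N x := fun x => add_nonneg (norm_nonneg _) (norm_nonneg _)
  have hNge : ∀ x, ‖x‖ ≤ N x := fun x => by
    calc ‖x‖ = ‖P x + (x - P x)‖ := by congr 1; abel
    _ ≤ ‖P x‖ + ‖x - P x‖ := norm_add_le _ _
  have hNle : ∀ x, N x ≤ (2 * ‖P‖ + 1) * ‖x‖ := fun x => by
    have h1 : ‖P x‖ ≤ ‖P‖ * ‖x‖ := P.le_opNorm x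
    have h2 : ‖x - P x‖ ≤ ‖x‖ + ‖P x‖ := norm_sub_le _ _
    simp only [hNdef]
    nlinarith [norm_nonneg x]
  have hNtri : ∀ x y, N (x + y) ≤ N x + N y := fun x y => by
    simp only [hNdef, map_add]
    have h1 : ‖P x + P y‖ ≤ ‖P x‖ + ‖P y‖ := norm_add_le _ _
    have h2 : ‖x + y - (P x + P y)‖ = ‖(x - P x) + (y - P y)‖ := by congr 1; abel
    have h3 : ‖(x - P x) + (y - P y)‖ ≤ ‖x - P x‖ + ‖y - P y‖ := norm_add_le _ _
    rw [h2] at *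
    linarith
  have hNsmul : ∀ (c : ℝ) x, N (c • x) = |c| * N x := fun c x => by
    simp only [hNdef, map_smul]
    rw [show c • x - c • P x = c • (x - P x) by rw [smul_sub], norm_smul, norm_smul]
    simp [Real.norm_eq_abs]; ring
  set B : Set X := {x | N x ≤ 1} with hBdef
  have hmemB : ∀ x, x ∈ B ↔ N x ≤ 1 := fun x => Iff.rfl
  have hnegB : ∀ x, x ∈ B → -x ∈ B := by
    intro x hx
    have := hNsmul (-1) x
    simp only [neg_smul, one_smul, abs_neg, abs_one, one_mul] at this
    rw [hmemB] at *
    rw [this]; exact hx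
  -- key vectors and functionals
  set Pc : X →L[ℝ] Y := P.codRestrict Y hmem with hPcdef
  have hPc : ∀ x, (Pc x : X) = P x := fun x => rfl
  set e : ℕ → X := fun k => ((T.symm (lp.single 1 k (1:ℝ)) : Y) : X) with hedef
  have he_mem : ∀ k, e k ∈ Y := fun k => (T.symm (lp.single 1 k (1:ℝ))).2
  have hPe : ∀ k, P (e k) = e k := fun k => hPid _ (he_mem k)
  have hNe : ∀ k, N (e k) = 1 := by
    intro k
    have h1 : ‖e k‖ = 1 := by
      rw [hedef]
      have : ‖(T.symm (lp.single 1 k (1:ℝ)) : Y)‖ = ‖(lp.single 1 k (1:ℝ) : L1aux)‖ :=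
        T.symm.norm_map _
      rw [show ‖((T.symm (lp.single 1 k (1:ℝ)) : Y) : X)‖ = ‖(T.symm (lp.single 1 k (1:ℝ)) : Y)‖ from rfl]
      rw [this, L1_norm_single_one]
    simp only [hNdef, hPe k, h1, sub_self, norm_zero, add_zero]
  set φ : ℕ → StrongDual ℝ X :=
    fun k => (coordL k).comp ((T.toLinearIsometry.toContinuousLinearMap).comp Pc) with hφdef
  have hφ : ∀ k x, φ k x = (T (Pc x) : L1aux) k := fun k x => rfl
  have hTPe : ∀ k, (T (Pc (e k)) : L1aux) = lp.single 1 k (1:ℝ) := by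
    intro k
    have : Pc (e k) = T.symm (lp.single 1 k (1:ℝ)) := by
      apply Subtype.ext
      rw [hPc, hPe]
    rw [this, T.apply_symm_apply]
  have hφe : ∀ k, φ k (e k) = 1 := by
    intro k
    rw [hφ, hTPe]
    exact lp.single_apply_self _ _ _
  have hφbound : ∀ k x, |φ k x| ≤ ‖P x‖ := by
    intro k x
    have h1 : |(T (Pc x) : L1aux) k| ≤ ‖(T (Pc x) : L1aux)‖ := by
      simpa using lp.norm_apply_le_norm one_ne_zero (T (Pc x)) k
    have h2 : ‖(T (Pc x) : L1aux)‖ = ‖P x‖ := by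
      rw [T.norm_map]; rfl
    rw [hφ]; rw [h2] at h1; exact h1
  -- the key geometric identity
  have hkey : ∀ k x, N (x - (φ k x) • e k) = N x - |φ k x| := by
    intro k x
    set t : ℝ := φ k x with htdef
    have hP1 : P (x - t • e k) = P x - t • e k := by
      rw [map_sub, map_smul, hPe]
    have hsub : ((Pc x - t • T.symm (lp.single 1 k (1:ℝ)) : Y) : X) = P x - t • e k := by
      push_cast
      rw [hPc]
    have hveq : (T (Pc x) : L1aux) k = t := (hφ k x).symm
    have hn1 : ‖P x - t • e k‖ = ‖P x‖ - |t| := by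
      have e2 : ‖P x - t • e k‖ = ‖T (Pc x - t • T.symm (lp.single 1 k (1:ℝ)))‖ := by
        rw [T.norm_map, ← hsub]
        rfl
      rw [e2, map_sub, map_smul, T.apply_symm_apply]
      have e3 := L1_norm_sub_single (T (Pc x)) k
      rw [hveq] at e3
      rw [e3, T.norm_map]
      rfl
    have hP2' : x - t • e k - (P x - t • e k) = x - P x := by abel
    simp only [hNdef, hP1, hn1, hP2']
    ring
  -- dual ball functionals are dominated by N
  have hdual : ∀ f ∈ dualBall B, ∀ w, f w ≤ N w := by
    intro f hf w
    rcases eq_or_lt_of_le (hNnonneg w) with h0 | hpos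
    · have hw0 : w = 0 := by
        have h1 : ‖w‖ ≤ N w := hNge w
        have : ‖w‖ ≤ 0 := by rw [← h0] at h1; exact h1
        exact norm_le_zero_iff.mp this
      rw [hw0] at h0 ⊢
      rw [map_zero, ← h0]
    · have hmemw : (N w)⁻¹ • w ∈ B := by
        rw [hmemB, hNsmul, abs_of_pos (inv_pos.mpr hpos), inv_mul_cancel₀ hpos.ne']
      have := hf _ hmemw
      rw [map_smul] at this
      have h2 : f w = N w * ((N w)⁻¹ * f w) := by
        field_simp
      rw [h2]
      calc N w * ((N w)⁻¹ * f w) ≤ N w * 1 := by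
            apply mul_le_mul_of_nonneg_left _ (le_of_lt hpos)
            simpa using this
      _ = N w := mul_one _
  have hdualabs : ∀ f ∈ dualBall B, ∀ w, |f w| ≤ N w := by
    intro f hf w
    rw [abs_le]
    constructor
    · have := hdual f hf (-w)
      rw [map_neg] at this
      have hsy : N (-w) = N w := by
        have := hNsmul (-1) w
        simpa using this
      linarith [hsy ▸ this]
    · exact hdual f hf w
  -- summability of Φ ∘ φ
  have hsummable : ∀ Φ : StrongDual ℝ (StrongDual ℝ X),
      Summable (fun k => |Φ (φ k)|) := by
    intro Φ
    apply summable_of_sum_range_le (c := ‖Φ‖ * ‖P‖) (fun k => abs_nonneg _)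
    intro m
    set K := Finset.range m
    set ε : ℕ → ℝ := fun k => if 0 ≤ Φ (φ k) then (1:ℝ) else -1 with hεdef
    have hε : ∀ k, ε k * Φ (φ k) = |Φ (φ k)| := by
      intro k
      rw [hεdef]
      by_cases h : 0 ≤ Φ (φ k)
      · simp [h, abs_of_nonneg h]
      · simp [h, abs_of_neg (lt_of_not_ge h)]
    have hφsum : ‖∑ k ∈ K, ε k • φ k‖ ≤ ‖P‖ := by
      apply ContinuousLinearMap.opNorm_le_bound _ (norm_nonneg P)
      intro x
      have h1 : (∑ k ∈ K, ε k • φ k) x = ∑ k ∈ K, ε k * φ k x := by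
        simp [ContinuousLinearMap.sum_apply]
      rw [h1, Real.norm_eq_abs]
      calc |∑ k ∈ K, ε k * φ k x| ≤ ∑ k ∈ K, |ε k * φ k x| := Finset.abs_sum_le_sum_abs _ _
      _ ≤ ∑ k ∈ K, |φ k x| := by
          apply Finset.sum_le_sum
          intro k _
          rw [abs_mul]
          have : |ε k| = 1 := by rw [hεdef]; by_cases h : 0 ≤ Φ (φ k) <;> simp [h]
          rw [this, one_mul]
      _ ≤ ‖(T (Pc x) : L1aux)‖ := by
          have := L1_sum_le (T (Pc x)) K
          simpa [hφ] using this
      _ = ‖P x‖ := by rw [T.norm_map]; rfl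
      _ ≤ ‖P‖ * ‖x‖ := P.le_opNorm x
    calc ∑ k ∈ K, |Φ (φ k)| = Φ (∑ k ∈ K, ε k • φ k) := by
          rw [map_sum]
          apply Finset.sum_congr rfl
          intro k _
          rw [map_smul, smul_eq_mul, hε]
    _ ≤ |Φ (∑ k ∈ K, ε k • φ k)| := le_abs_self _
    _ ≤ ‖Φ‖ * ‖∑ k ∈ K, ε k • φ k‖ := Φ.le_opNorm _
    _ ≤ ‖Φ‖ * ‖P‖ := mul_le_mul_of_nonneg_left hφsum (norm_nonneg Φ)
  -- slice stability under coordinate replacement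
  have hreplace : ∀ (s : ℝ), |s| ≤ 1 → ∀ k, ∀ f ∈ dualBall B,
      f + (s - f (e k)) • φ k ∈ dualBall B := by
    intro s hs k f hf x hx
    set t : ℝ := φ k x with htdef
    have hval : (f + (s - f (e k)) • φ k) x = f (x - t • e k) + s * t := by
      simp only [ContinuousLinearMap.add_apply, ContinuousLinearMap.smul_apply, smul_eq_mul,
        map_sub, map_smul, smul_eq_mul, ← htdef]
      ring
    rw [hval]
    have h1 : f (x - t • e k) ≤ N (x - t • e k) := hdual f hf _
    have h2 : N (x - t • e k) = N x - |t| := hkey k x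
    have h3 : s * t ≤ |t| := by
      calc s * t ≤ |s * t| := le_abs_self _
      _ = |s| * |t| := abs_mul _ _
      _ ≤ 1 * |t| := mul_le_mul_of_nonneg_right hs (abs_nonneg _)
      _ = |t| := one_mul _
    have hx1 : N x ≤ 1 := hx
    linarith
  refine ⟨B, ?_, ?_⟩
  · -- IsEquivBall
    refine ⟨?_, ?_, ?_, ?_, ?_⟩
    · have hc : Continuous N := by
        apply Continuous.add
        · exact P.continuous.norm
        · exact (continuous_id.sub P.continuous).norm
      exact isClosed_le hc continuous_const
    · intro x hx y hy a b ha hb hab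
      rw [hmemB]
      calc N (a • x + b • y) ≤ N (a • x) + N (b • y) := hNtri _ _
      _ = |a| * N x + |b| * N y := by rw [hNsmul, hNsmul]
      _ = a * N x + b * N y := by rw [abs_of_nonneg ha, abs_of_nonneg hb]
      _ ≤ a * 1 + b * 1 := by
          apply add_le_add
          · exact mul_le_mul_of_nonneg_left hx ha
          · exact mul_le_mul_of_nonneg_left hy hb
      _ = 1 := by rw [mul_one, mul_one, hab]
    · ext x
      constructor
      · intro hx
        rw [Set.mem_neg]
        exact hnegB x hx
      · intro hx
        rw [Set.mem_neg] at hx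
        have := hnegB _ hx
        simpa using this
    · refine ⟨(2 * ‖P‖ + 1)⁻¹, by positivity, ?_⟩
      intro x hx
      rw [mem_closedBall_zero_iff] at hx
      rw [hmemB]
      calc N x ≤ (2 * ‖P‖ + 1) * ‖x‖ := hNle x
      _ ≤ (2 * ‖P‖ + 1) * (2 * ‖P‖ + 1)⁻¹ := by
          apply mul_le_mul_of_nonneg_left hx (by positivity)
      _ = 1 := by
          rw [mul_inv_cancel₀]
          positivity
    · refine ⟨1, ?_⟩
      intro x hx
      rw [mem_closedBall_zero_iff]
      exact le_trans (hNge x) hx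
  · -- main slice statement
    intro n lam hlam hsum Φ β hβ
    have hn : n ≠ 0 := by
      rintro rfl
      simp at hsum
    have : Nonempty (Fin n) := ⟨⟨0, Nat.pos_of_ne_zero hn⟩⟩
    set α : Fin n → ℝ := fun i => sSup ((fun f => Φ i f) '' dualBall B) with hαdef
    -- pick points deep in the slices
    have hpick : ∀ i : Fin n, ∃ f ∈ dualBall B, α i - β i / 2 < Φ i f := by
      intro i
      have hne : ((fun f => Φ i f) '' dualBall B).Nonempty := by
        refine ⟨Φ i 0, 0, ?_, rfl⟩
        intro x _
        simp
      have hlt : α i - β i / 2 < α i := by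
        have := hβ i; linarith
      obtain ⟨y, ⟨f, hf, rfl⟩, hy⟩ := exists_lt_of_lt_csSup hne hlt
      exact ⟨f, hf, hy⟩
    choose f hfB hfΦ using hpick
    -- choose the small parameter
    set η : ℝ := (Finset.univ.inf' Finset.univ_nonempty β) / 4 with hηdef
    have hηpos : 0 < η := by
      rw [hηdef]
      have : 0 < Finset.univ.inf' Finset.univ_nonempty β := by
        rw [Finset.lt_inf'_iff]
        intro i _
        exact hβ i
      linarith
    have hηle : ∀ i, 4 * η ≤ β i := by
      intro i
      rw [hηdef]
      have : Finset.univ.inf' Finset.univ_nonempty β ≤ β i :=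
        Finset.inf'_le _ (Finset.mem_univ i)
      linarith
    -- choose a far-away coordinate
    have hk : ∃ k, ∀ i, |Φ i (φ k)| < η := by
      have hev : ∀ i : Fin n, ∀ᶠ k in Filter.atTop, |Φ i (φ k)| < η := by
        intro i
        have := (hsummable (Φ i)).tendsto_atTop_zero
        have := this.eventually (eventually_lt_nhds hηpos)
        filter_upwards [this] with k hkk
        simpa [abs_abs] using hkk
      have := (Filter.eventually_all.mpr hev).exists
      exact this
    obtain ⟨k, hkη⟩ := hk
    -- the shifted functionals
    set g : Fin n → StrongDual ℝ X := fun i => f i + (1 - f i (e k)) • φ k with hgdef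
    set h : Fin n → StrongDual ℝ X := fun i => f i + (-1 - f i (e k)) • φ k with hhdef
    have hgB : ∀ i, g i ∈ dualBall B := fun i =>
      hreplace 1 (by norm_num) k (f i) (hfB i)
    have hhB : ∀ i, h i ∈ dualBall B := fun i =>
      hreplace (-1) (by norm_num) k (f i) (hfB i)
    have hek_mem : e k ∈ B := by rw [hmemB, hNe]
    have hfek : ∀ i, |f i (e k)| ≤ 1 := by
      intro i
      have := hdualabs (f i) (hfB i) (e k)
      rwa [hNe] at this
    have hslice : ∀ (s : ℝ), |s| ≤ 1 → ∀ i,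
        Φ i (f i + (s - f i (e k)) • φ k) > α i - β i := by
      intro s hs i
      rw [map_add, map_smul, smul_eq_mul]
      have h1 : |s - f i (e k)| ≤ 2 := by
        have := hfek i
        rw [abs_le] at *
        constructor <;> [linarith [hs.1, this.2]; linarith [hs.2, this.1]]
      have h2 : |(s - f i (e k)) * Φ i (φ k)| ≤ 2 * η := by
        rw [abs_mul]
        apply mul_le_mul h1 (le_of_lt (hkη i)) (abs_nonneg _) (by norm_num)
      have h3 : (s - f i (e k)) * Φ i (φ k) ≥ -(2 * η) := neg_le_of_abs_le h2
      have h4 := hfΦ i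
      have h5 := hηle i
      linarith
    have hgS : ∀ i, g i ∈ supSlice (dualBall B) (Φ i) (β i) :=
      fun i => ⟨hgB i, hslice 1 (by norm_num) i⟩
    have hhS : ∀ i, h i ∈ supSlice (dualBall B) (Φ i) (β i) :=
      fun i => ⟨hhB i, hslice (-1) (by norm_num) i⟩
    set G : StrongDual ℝ X := ∑ i, lam i • g i with hGdef
    set H : StrongDual ℝ X := ∑ i, lam i • h i with hHdef
    have hGmem : G ∈ ccomb lam (fun i => supSlice (dualBall B) (Φ i) (β i)) :=
      ⟨g, hgS, rfl⟩
    have hHmem : H ∈ ccomb lam (fun i => supSlice (dualBall B) (Φ i) (β i)) :=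
      ⟨h, hhS, rfl⟩
    have hGH : G - H = (2:ℝ) • φ k := by
      rw [hGdef, hHdef, ← Finset.sum_sub_distrib]
      have : ∀ i : Fin n, lam i • g i - lam i • h i = lam i • ((2:ℝ) • φ k) := by
        intro i
        rw [show lam i • g i - lam i • h i = lam i • (g i - h i) from (smul_sub _ _ _).symm, hgdef, hhdef]
        congr 1
        simp only [add_sub_add_left_eq_sub, ← sub_smul]
        norm_num
        rw [show (1 - f i (e k)) • φ k - (-1 - f i (e k)) • φ k = ((1 - f i (e k)) - (-1 - f i (e k))) • φ k from (sub_smul _ _ _).symm]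
        congr 1; ring
      rw [Finset.sum_congr rfl (fun i _ => this i), ← Finset.sum_smul, hsum, one_smul]
    -- the value 2 is attained
    have hval2 : dualNormOf B (G - H) = 2 := by
      rw [hGH]
      apply IsGreatest.csSup_eq
      constructor
      · exact ⟨e k, hek_mem, by simp [hφe k]⟩
      · rintro y ⟨x, hx, rfl⟩
        simp only [ContinuousLinearMap.smul_apply, smul_eq_mul]
        have h1 : |φ k x| ≤ N x := le_trans (hφbound k x) (by
          simp only [hNdef]
          linarith [norm_nonneg (x - P x)])
        have h2 : N x ≤ 1 := hx
        have := le_trans (le_abs_self (φ k x)) (le_trans h1 h2)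
        linarith
    -- upper bound : every element is ≤ 2
    have hub : ∀ d ∈ Set.image2 (fun f g => dualNormOf B (f - g))
          (ccomb lam (fun i => supSlice (dualBall B) (Φ i) (β i)))
          (ccomb lam (fun i => supSlice (dualBall B) (Φ i) (β i))), d ≤ 2 := by
      rintro d ⟨u, hu, v, hv, rfl⟩
      obtain ⟨p, hp, rfl⟩ := hu
      obtain ⟨q, hq, rfl⟩ := hv
      apply Real.sSup_le _ (by norm_num)
      rintro y ⟨x, hx, rfl⟩
      have hvals : ∀ (r : Fin n → StrongDual ℝ X),
          (∀ i, r i ∈ dualBall B) → ∀ w ∈ B, (∑ i, lam i • r i) w ≤ 1 := by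
        intro r hr w hw
        have h1 : (∑ i, lam i • r i) w = ∑ i, lam i * r i w := by
          simp [ContinuousLinearMap.sum_apply]
        rw [h1]
        calc ∑ i, lam i * r i w ≤ ∑ i, lam i * 1 := by
              apply Finset.sum_le_sum
              intro i _
              exact mul_le_mul_of_nonneg_left (hr i w hw) (le_of_lt (hlam i))
        _ = 1 := by simp [hsum]
      have hP1 : (∑ i, lam i • p i) x ≤ 1 :=
        hvals p (fun i => (hp i).1) x hx
      have hQ1 : (∑ i, lam i • q i) (-x) ≤ 1 :=
        hvals q (fun i => (hq i).1) (-x) (hnegB x hx)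
      have h2 : (∑ i, lam i • q i) x ≥ -1 := by
        rw [map_neg] at hQ1
        linarith
      simp only [ContinuousLinearMap.sub_apply]
      linarith
    apply le_antisymm
    · exact Real.sSup_le hub (by norm_num)
    · apply le_csSup ⟨2, hub⟩
      rw [← hval2]
      exact Set.mem_image2_of_mem hGmem hHmem
end
end

section
/- Let X be a Banach space with octahedral norm. Then for any x₁,…,x_N ∈ S_X, ρ ∈ (0,1), weights α_i > 0 with Σα_i = 1, and any δ > 0, there exist functionals f_i, g_i ∈ S(B_{X*}, x_i, ρ) such that ‖Σ α_i f_i − Σ α_i g_i‖ > 2 − δ. -/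
open scoped BigOperators
open Metric

noncomputable section

/-- The norm of `X` is octahedral. -/
def IsOctahedral (X : Type*) [NormedAddCommGroup X] [NormedSpace ℝ X] : Prop :=
  ∀ ε : ℝ, 0 < ε → ∀ Y : Subspace ℝ X, FiniteDimensional ℝ Y →
    ∃ x : X, ‖x‖ = 1 ∧ ∀ y ∈ Y, ∀ l : ℝ, (1 - ε) * (‖y‖ + |l|) ≤ ‖y + l • x‖

/-- The weak-star slice of the dual unit ball determined by `x` and `ρ`. -/
def wSlice {X : Type*} [NormedAddCommGroup X] [NormedSpace ℝ X] (x : X) (ρ : ℝ) :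
    Set (StrongDual ℝ X) :=
  {f | ‖f‖ ≤ 1 ∧ 1 - ρ < f x}

theorem octahedral_gives_far_apart_ccomb_functionals
    (X : Type*) [NormedAddCommGroup X] [NormedSpace ℝ X] [CompleteSpace X]
    (hoct : IsOctahedral X)
    (N : ℕ) (x : Fin N → X) (hx : ∀ i, ‖x i‖ = 1)
    (ρ : ℝ) (hρ : ρ ∈ Set.Ioo (0:ℝ) 1)
    (α : Fin N → ℝ) (hα : ∀ i, 0 < α i) (hsum : ∑ i, α i = 1)
    (δ : ℝ) (hδ : 0 < δ) :
    ∃ f g : Fin N → StrongDual ℝ X,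
      (∀ i, f i ∈ wSlice (x i) ρ) ∧ (∀ i, g i ∈ wSlice (x i) ρ) ∧
      2 - δ < ‖(∑ i, α i • f i) - ∑ i, α i • g i‖ := by
  obtain ⟨hρ0, hρ1⟩ := hρ
  set ε : ℝ := min ρ δ / 8 with hεdef
  have hε : 0 < ε := by positivity
  have hερ : 2 * ε < ρ := by
    have : min ρ δ ≤ ρ := min_le_left _ _
    simp only [hεdef]; linarith
  have hεδ : 4 * ε < δ := by
    have : min ρ δ ≤ δ := min_le_right _ _
    simp only [hεdef]; linarith
  set Y : Subspace ℝ X := Submodule.span ℝ (Set.range x) with hY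
  have hYfd : FiniteDimensional ℝ Y :=
    FiniteDimensional.span_of_finite ℝ (Set.finite_range x)
  obtain ⟨u, hu1, hu2⟩ := hoct ε hε Y hYfd
  have hxY : ∀ i, x i ∈ Y := fun i =>
    Submodule.subset_span (Set.mem_range_self i)
  have h1 : ∀ i, (1 - ε) * 2 ≤ ‖x i + u‖ := by
    intro i
    have := hu2 (x i) (hxY i) 1
    simpa [hx i, one_smul, one_add_one_eq_two] using this
  have h2 : ∀ i, (1 - ε) * 2 ≤ ‖x i - u‖ := by
    intro i
    have := hu2 (x i) (hxY i) (-1)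
    simpa [hx i, sub_eq_add_neg, one_add_one_eq_two] using this
  have hεlt : ε < 1 := by
    have : min ρ δ ≤ ρ := min_le_left _ _
    simp only [hεdef]; linarith
  have hpos1 : ∀ i, x i + u ≠ 0 := by
    intro i h
    have := h1 i
    rw [h, norm_zero] at this
    nlinarith
  have hpos2 : ∀ i, x i - u ≠ 0 := by
    intro i h
    have := h2 i
    rw [h, norm_zero] at this
    nlinarith
  have Hf : ∀ i, ∃ F : StrongDual ℝ X, ‖F‖ = 1 ∧ F (x i + u) = ‖x i + u‖ := by
    intro i
    obtain ⟨F, hF1, hF2⟩ := exists_dual_vector ℝ (x i + u) (norm_ne_zero_iff.mpr (hpos1 i))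
    exact ⟨F, hF1, by exact_mod_cast hF2⟩
  have Hg : ∀ i, ∃ G : StrongDual ℝ X, ‖G‖ = 1 ∧ G (x i - u) = ‖x i - u‖ := by
    intro i
    obtain ⟨G, hG1, hG2⟩ := exists_dual_vector ℝ (x i - u) (norm_ne_zero_iff.mpr (hpos2 i))
    exact ⟨G, hG1, by exact_mod_cast hG2⟩
  choose f hf1 hf2 using Hf
  choose g hg1 hg2 using Hg
  -- basic bounds on values of f i and g i
  have hfb : ∀ (i : Fin N) (z : X), f i z ≤ ‖z‖ := by
    intro i z
    calc f i z ≤ ‖f i z‖ := le_abs_self _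
    _ ≤ ‖f i‖ * ‖z‖ := (f i).le_opNorm z
    _ = ‖z‖ := by rw [hf1 i, one_mul]
  have hgb : ∀ (i : Fin N) (z : X), g i z ≤ ‖z‖ := by
    intro i z
    calc g i z ≤ ‖g i z‖ := le_abs_self _
    _ ≤ ‖g i‖ * ‖z‖ := (g i).le_opNorm z
    _ = ‖z‖ := by rw [hg1 i, one_mul]
  have hfx : ∀ i, 1 - 2 * ε ≤ f i (x i) := by
    intro i
    have h3 : f i (x i) + f i u = ‖x i + u‖ := by
      rw [← (f i).map_add]; exact hf2 i
    have h4 : f i u ≤ 1 := by simpa [hu1] using hfb i u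
    nlinarith [h1 i]
  have hgx : ∀ i, 1 - 2 * ε ≤ g i (x i) := by
    intro i
    have h3 : g i (x i) - g i u = ‖x i - u‖ := by
      rw [← (g i).map_sub]; exact hg2 i
    have h4 : g i (-u) ≤ 1 := by simpa [hu1] using hgb i (-u)
    have h5 : g i (-u) = - g i u := (g i).map_neg u
    nlinarith [h2 i]
  have hfu : ∀ i, 1 - 2 * ε ≤ f i u := by
    intro i
    have h3 : f i (x i) + f i u = ‖x i + u‖ := by
      rw [← (f i).map_add]; exact hf2 i
    have h4 : f i (x i) ≤ 1 := by simpa [hx i] using hfb i (x i)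
    nlinarith [h1 i]
  have hgu : ∀ i, g i u ≤ -(1 - 2 * ε) := by
    intro i
    have h3 : g i (x i) - g i u = ‖x i - u‖ := by
      rw [← (g i).map_sub]; exact hg2 i
    have h4 : g i (x i) ≤ 1 := by simpa [hx i] using hgb i (x i)
    nlinarith [h2 i]
  refine ⟨f, g, ?_, ?_, ?_⟩
  · intro i
    exact ⟨(hf1 i).le, lt_of_lt_of_le (by linarith) (hfx i)⟩
  · intro i
    exact ⟨(hg1 i).le, lt_of_lt_of_le (by linarith) (hgx i)⟩
  · -- evaluate at u
    set F : StrongDual ℝ X := (∑ i, α i • f i) - ∑ i, α i • g i with hF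
    have hFu : F u = ∑ i, α i * (f i u - g i u) := by
      simp [hF, Finset.sum_apply', mul_sub, Finset.sum_sub_distrib]
    have key : 2 - 4 * ε ≤ F u := by
      rw [hFu]
      have : ∑ i, α i * (2 - 4 * ε) ≤ ∑ i, α i * (f i u - g i u) := by
        apply Finset.sum_le_sum
        intro i _
        have := hfu i
        have := hgu i
        nlinarith [(hα i).le]
      calc 2 - 4 * ε = ∑ i, α i * (2 - 4 * ε) := by
            rw [← Finset.sum_mul, hsum, one_mul]
      _ ≤ _ := this
    have hFle : F u ≤ ‖F‖ := by
      calc F u ≤ ‖F u‖ := le_abs_self _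
      _ ≤ ‖F‖ * ‖u‖ := F.le_opNorm u
      _ = ‖F‖ := by rw [hu1, mul_one]
    linarith
end
end
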